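/- Let ω < 0, 0 < α ≤ 1 and 0 < αγ ≤ β ≤ 1. For every θ ∈ (0, απ/2), setting μ(θ) = (|ω| sin θ / sin(απ/2 − θ))^(1/α), one has F(i·μ(θ)) = Λ(θ); i.e., the purely imaginary number i·μ(θ) is a root of the characteristic equation F(s) = λ for λ = Λ(θ). -/

import Mathlib

open Real Complex Filter Set Topology

/-- The curve parametrization Λ(θ) bounding the stability region. -/
noncomputable def Lam (α β γ ω : ℝ) (θ : ℝ) : ℂ :=
  ((|ω| ^ (β / α) * Real.sin θ ^ (β / α - γ) * Real.sin (α * π / 2) ^ γ *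
      Real.sin (α * π / 2 - θ) ^ (-(β / α)) : ℝ) : ℂ) *
    Complex.exp (Complex.I * ((γ * θ + (β - α * γ) * π / 2 : ℝ) : ℂ))

/-- The characteristic function F(s) = s^(β-αγ) (s^α - ω)^γ (principal branches). -/
noncomputable def Fc (α β γ ω : ℝ) (s : ℂ) : ℂ :=
  s ^ ((β - α * γ : ℝ) : ℂ) * (s ^ ((α : ℝ) : ℂ) - (ω : ℂ)) ^ ((γ : ℝ) : ℂ)

/-- μ(θ) = (|ω| sin θ / sin(απ/2 - θ))^(1/α). -/
noncomputable def muP (α ω : ℝ) (θ : ℝ) : ℝ :=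
  (|ω| * Real.sin θ / Real.sin (α * π / 2 - θ)) ^ (1 / α)

/-- ρ(θ) = |ω| sin(απ/2) / sin(απ/2 - θ). -/
noncomputable def rhoP (α ω : ℝ) (θ : ℝ) : ℝ :=
  |ω| * Real.sin (α * π / 2) / Real.sin (α * π / 2 - θ)

lemma polar_cpow {r θ : ℝ} (c : ℝ) (hr : 0 < r) (hθ : θ ∈ Set.Ioc (-π) π) :
    ((r : ℂ) * Complex.exp ((θ : ℂ) * Complex.I)) ^ ((c : ℝ) : ℂ)
      = ((r ^ c : ℝ) : ℂ) * Complex.exp (((c * θ : ℝ) : ℂ) * Complex.I) := by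
  have hz : (r : ℂ) * Complex.exp ((θ : ℂ) * Complex.I) ≠ 0 :=
    mul_ne_zero (by exact_mod_cast hr.ne') (Complex.exp_ne_zero _)
  have habs : ‖(r : ℂ) * Complex.exp ((θ : ℂ) * Complex.I)‖ = r := by
    rw [norm_mul, Complex.norm_exp_ofReal_mul_I, Complex.norm_of_nonneg hr.le, mul_one]
  have harg : Complex.arg ((r : ℂ) * Complex.exp ((θ : ℂ) * Complex.I)) = θ := by
    rw [Complex.arg_real_mul _ hr, Complex.exp_mul_I, Complex.arg_cos_add_sin_mul_I hθ]
  have hlog : Complex.log ((r : ℂ) * Complex.exp ((θ : ℂ) * Complex.I))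
      = (Real.log r : ℂ) + (θ : ℂ) * Complex.I := by
    rw [Complex.log, habs, harg]
  rw [Complex.cpow_def_of_ne_zero hz, hlog]
  rw [add_mul, Complex.exp_add]
  congr 1
  · rw [← Complex.ofReal_mul, ← Complex.ofReal_exp, Real.rpow_def_of_pos hr]
  · push_cast; ring_nf

theorem F_at_imaginary_root (α β γ ω : ℝ) (hω : ω < 0) (hα0 : 0 < α) (hα1 : α ≤ 1)
    (hαγ : 0 < α * γ) (hβ0 : α * γ ≤ β) (hβ1 : β ≤ 1) :
    ∀ θ ∈ Set.Ioo 0 (α * π / 2),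
      Fc α β γ ω (Complex.I * (muP α ω θ : ℂ)) = Lam α β γ ω θ := by
  intro θ hθ
  obtain ⟨hθ0, hθA⟩ := hθ
  have hπ := Real.pi_pos
  have hγ : 0 < γ := by nlinarith
  have hApos : 0 < α * π / 2 := lt_trans hθ0 hθA
  have hA2 : α * π / 2 ≤ π / 2 := by nlinarith
  have hsθ : 0 < Real.sin θ := Real.sin_pos_of_pos_of_lt_pi hθ0 (by linarith)
  have hsA : 0 < Real.sin (α * π / 2) := Real.sin_pos_of_pos_of_lt_pi hApos (by linarith)
  have hsΔ : 0 < Real.sin (α * π / 2 - θ) :=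
    Real.sin_pos_of_pos_of_lt_pi (by linarith) (by linarith)
  have hw : 0 < |ω| := abs_pos.mpr hω.ne
  have hx : 0 < |ω| * Real.sin θ / Real.sin (α * π / 2 - θ) := by positivity
  have hμ : 0 < muP α ω θ := Real.rpow_pos_of_pos hx _
  have hρ : 0 < rhoP α ω θ := by unfold rhoP; positivity
  have hμα : muP α ω θ ^ α = |ω| * Real.sin θ / Real.sin (α * π / 2 - θ) := by
    rw [muP, ← Real.rpow_mul hx.le, one_div, inv_mul_cancel₀ hα0.ne', Real.rpow_one]
  have hs : Complex.I * ((muP α ω θ : ℝ) : ℂ)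
      = ((muP α ω θ : ℝ) : ℂ) * Complex.exp (((π / 2 : ℝ) : ℂ) * Complex.I) := by
    rw [Complex.exp_mul_I, ← Complex.ofReal_cos, ← Complex.ofReal_sin,
      Real.cos_pi_div_two, Real.sin_pi_div_two]
    push_cast; ring
  have hsub : (Complex.I * ((muP α ω θ : ℝ) : ℂ)) ^ ((α : ℝ) : ℂ) - (ω : ℂ)
      = ((rhoP α ω θ : ℝ) : ℂ) * Complex.exp (((θ : ℝ) : ℂ) * Complex.I) := by
    rw [hs, polar_cpow α hμ ⟨by linarith, by linarith⟩]
    rw [Complex.exp_mul_I, Complex.exp_mul_I, ← Complex.ofReal_cos, ← Complex.ofReal_sin,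
      ← Complex.ofReal_cos, ← Complex.ofReal_sin]
    have h1 : α * (π / 2) = α * π / 2 := by ring
    rw [h1, hμα, rhoP]
    have hwω : |ω| = -ω := abs_of_neg hω
    set D := Real.sin (α * π / 2 - θ) with hDdef
    have hDne : D ≠ 0 := hsΔ.ne'
    have hDsub : D = Real.sin (α * π / 2) * Real.cos θ - Real.cos (α * π / 2) * Real.sin θ := by
      rw [hDdef, Real.sin_sub]
    rw [Complex.ext_iff]
    constructor
    · simp only [Complex.sub_re, Complex.mul_re, Complex.ofReal_re, Complex.ofReal_im,
        Complex.add_re, Complex.add_im, Complex.mul_im, Complex.I_re, Complex.I_im]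
      rw [hwω]
      field_simp
      linear_combination (-ω) * hDsub
    · simp only [Complex.sub_im, Complex.mul_im, Complex.ofReal_re, Complex.ofReal_im,
        Complex.add_re, Complex.add_im, Complex.mul_re, Complex.I_re, Complex.I_im]
      field_simp
      ring
  have hlogμ : Real.log (muP α ω θ)
      = (1 / α) * (Real.log |ω| + Real.log (Real.sin θ) - Real.log (Real.sin (α * π / 2 - θ))) := by
    rw [muP, Real.log_rpow hx, Real.log_div (by positivity) hsΔ.ne', Real.log_mul hw.ne' hsθ.ne']
  have hlogρ : Real.log (rhoP α ω θ)
      = Real.log |ω| + Real.log (Real.sin (α * π / 2)) - Real.log (Real.sin (α * π / 2 - θ)) := by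
    rw [rhoP, Real.log_div (by positivity) hsΔ.ne', Real.log_mul hw.ne' hsA.ne']
  have key : muP α ω θ ^ (β - α * γ) * rhoP α ω θ ^ γ
      = |ω| ^ (β / α) * Real.sin θ ^ (β / α - γ) * Real.sin (α * π / 2) ^ γ *
        Real.sin (α * π / 2 - θ) ^ (-(β / α)) := by
    rw [Real.rpow_def_of_pos hμ, Real.rpow_def_of_pos hρ, Real.rpow_def_of_pos hw,
      Real.rpow_def_of_pos hsθ, Real.rpow_def_of_pos hsA, Real.rpow_def_of_pos hsΔ,
      ← Real.exp_add, ← Real.exp_add, ← Real.exp_add, ← Real.exp_add, Real.exp_eq_exp,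
      hlogμ, hlogρ]
    field_simp
    ring
  rw [Fc, hsub, hs, polar_cpow (β - α * γ) hμ ⟨by linarith, by linarith⟩,
    polar_cpow γ hρ ⟨by linarith, by linarith⟩, Lam, mul_mul_mul_comm,
    ← Complex.ofReal_mul, key, ← Complex.exp_add]
  congr 1
  push_cast
  ring
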